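/- Let A be a UFD of characteristic p > 0 and B a subring of A containing A^p. Assume elements f_1,…,f_m ∈ A form a p-basis of C_B(f_1,…,f_m) over B, and set R_i = B[f_1,…,f_{i-1},f_{i+1},…,f_m]. Then for every i ∈ {1,…,m} and all b,c ∈ R_i with b ≠ 0 and gcd(b,c) a unit, the element b·f_i + c is square-free and B-free. -/

import Mathlib

/-- The monomial `f₁^{α₁} ⋯ f_m^{α_m}` for a multi-index `α ∈ Ω_m` (all exponents `< p`). -/
def pMonomial {S : Type*} [CommRing S] {m p : ℕ} (f : Fin m → S) (α : Fin m → Fin p) : S :=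
  ∏ i, f i ^ (α i : ℕ)

/-- `f₁, …, f_m` are `p`-independent over the subring `B`. -/
def pIndependent {S : Type*} [CommRing S] (B : Subring S) {m : ℕ} (p : ℕ) (f : Fin m → S) : Prop :=
  ∀ b : (Fin m → Fin p) → S, (∀ α, b α ∈ B) →
    ∑ α : Fin m → Fin p, b α * pMonomial f α = 0 → ∀ α, b α = 0

/-- `f₁, …, f_m` form a `p`-basis of `R` over `B`. -/
def IsPBasis {S : Type*} [CommRing S] (B : Subring S) (R : Set S) {m : ℕ} (p : ℕ)
    (f : Fin m → S) : Prop :=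
  (↑B ⊆ R) ∧ (∀ α : Fin m → Fin p, pMonomial f α ∈ R) ∧ pIndependent B p f ∧
    ∀ r ∈ R, ∃ b : (Fin m → Fin p) → S, (∀ α, b α ∈ B) ∧
      r = ∑ α : Fin m → Fin p, b α * pMonomial f α

/-- An element is `B`-free if it has no noninvertible factor from `B`. -/
def BFree {S : Type*} [CommRing S] (B : Subring S) (a : S) : Prop :=
  ∀ b ∈ B, b ∣ a → IsUnit b

/-- `C_B(f₁,…,f_m) = B₀(f₁,…,f_m) ∩ A`: those elements of `A` lying in the field of
fractions of `B[f₁,…,f_m]`. -/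
def CB {S : Type*} [CommRing S] (B : Subring S) {m : ℕ} (f : Fin m → S) : Set S :=
  {a | ∃ s t : S, s ∈ Subring.closure (↑B ∪ Set.range f) ∧
      t ∈ Subring.closure (↑B ∪ Set.range f) ∧ s ≠ 0 ∧ a * s = t}

/-- A `B`-derivation of `A`: additive, satisfies the Leibniz rule, and vanishes on `B`. -/
def IsBDerivation {S : Type*} [CommRing S] (B : Subring S) (d : S → S) : Prop :=
  (∀ x y, d (x + y) = d x + d y) ∧ (∀ x y, d (x * y) = x * d y + y * d x) ∧ ∀ b ∈ B, d b = 0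


namespace PBasisAux

variable {A : Type*} [CommRing A] {m : ℕ}

/-- Monomial with natural-number exponents. -/
def natMon (f : Fin m → A) (γ : Fin m → ℕ) : A := ∏ j, f j ^ γ j

/-- Formal `i`-th partial derivative of a monomial. -/
def natDer (f : Fin m → A) (i : Fin m) (γ : Fin m → ℕ) : A :=
  (γ i : A) * (f i ^ (γ i - 1) * ∏ j ∈ Finset.univ.erase i, f j ^ γ j)

lemma natMon_eq (f : Fin m → A) (i : Fin m) (γ : Fin m → ℕ) :
    natMon f γ = f i ^ γ i * ∏ j ∈ Finset.univ.erase i, f j ^ γ j :=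
  (Finset.mul_prod_erase _ _ (Finset.mem_univ i)).symm

lemma natMon_add (f : Fin m → A) (γ δ : Fin m → ℕ) :
    natMon f (γ + δ) = natMon f γ * natMon f δ := by
  simp [natMon, pow_add, Finset.prod_mul_distrib]

/-- Leibniz rule for monomials. -/
lemma natDer_add (f : Fin m → A) (i : Fin m) (γ δ : Fin m → ℕ) :
    natDer f i (γ + δ) = natMon f γ * natDer f i δ + natMon f δ * natDer f i γ := by
  have herase : ∀ γ δ : Fin m → ℕ, (∏ j ∈ Finset.univ.erase i, f j ^ (γ + δ) j)
      = (∏ j ∈ Finset.univ.erase i, f j ^ γ j) * ∏ j ∈ Finset.univ.erase i, f j ^ δ j := by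
    intro γ δ
    rw [← Finset.prod_mul_distrib]
    exact Finset.prod_congr rfl fun j _ => by simp [pow_add]
  rw [natDer, natDer, natDer, natMon_eq f i, natMon_eq f i, herase]
  set Q1 := ∏ j ∈ Finset.univ.erase i, f j ^ γ j
  set Q2 := ∏ j ∈ Finset.univ.erase i, f j ^ δ j
  have hγδ : (γ + δ) i = γ i + δ i := rfl
  rw [hγδ]
  generalize γ i = a
  generalize δ i = b
  rcases Nat.eq_zero_or_pos a with h1 | h1
  · subst h1; rcases Nat.eq_zero_or_pos b with h2 | h2
    · subst h2; simp
    · obtain ⟨b', rfl⟩ : ∃ b', b = b' + 1 := ⟨b - 1, by omega⟩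
      simp only [Nat.zero_add, Nat.cast_zero, zero_mul, mul_zero, add_zero, pow_zero, one_mul,
        Nat.add_sub_cancel]
      push_cast; ring
  · obtain ⟨a', rfl⟩ : ∃ a', a = a' + 1 := ⟨a - 1, by omega⟩
    rcases Nat.eq_zero_or_pos b with h2 | h2
    · subst h2
      simp only [Nat.add_zero, Nat.cast_zero, zero_mul, mul_zero, zero_add, pow_zero, one_mul,
        Nat.add_sub_cancel]
      push_cast; ring
    · obtain ⟨b', rfl⟩ : ∃ b', b = b' + 1 := ⟨b - 1, by omega⟩
      have e1 : a' + 1 + (b' + 1) - 1 = a' + b' + 1 := by omega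
      have e2 : a' + 1 + (b' + 1) = (a' + b' + 1) + 1 := by omega
      rw [e1, e2, Nat.add_sub_cancel, Nat.add_sub_cancel]
      push_cast; ring


section CharP
variable (p : ℕ) [CharP A p]

lemma cast_mod (n : ℕ) : ((n % p : ℕ) : A) = (n : A) := by
  conv_rhs => rw [← Nat.div_add_mod n p]
  push_cast
  rw [CharP.cast_eq_zero A p]
  ring

lemma natMon_reduce (f : Fin m → A) (γ : Fin m → ℕ) (hp : 0 < p) :
    natMon f γ = (∏ j, (f j ^ (γ j / p)) ^ p) * natMon f (fun j => γ j % p) := by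
  rw [natMon, natMon, ← Finset.prod_mul_distrib]
  refine Finset.prod_congr rfl fun j _ => ?_
  rw [← pow_mul, ← pow_add]
  rw [Nat.mul_comm, Nat.div_add_mod]

lemma natDer_reduce (f : Fin m → A) (i : Fin m) (γ : Fin m → ℕ) (hp : 0 < p) :
    (∏ j, (f j ^ (γ j / p)) ^ p) * natDer f i (fun j => γ j % p) = natDer f i γ := by
  rcases Nat.eq_zero_or_pos (γ i % p) with h0 | h0
  · have hz : ((γ i % p : ℕ) : A) = 0 := by rw [h0]; simp
    have hz' : ((γ i : ℕ) : A) = 0 := by rw [← cast_mod p (γ i), hz]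
    simp only [natDer, hz, hz', zero_mul, mul_zero]
  · rw [natDer, natDer]
    have hhead : (∏ j, (f j ^ (γ j / p)) ^ p)
        = (f i ^ (γ i / p)) ^ p * ∏ j ∈ Finset.univ.erase i, (f j ^ (γ j / p)) ^ p :=
      (Finset.mul_prod_erase _ _ (Finset.mem_univ i)).symm
    rw [hhead]
    have htail : (∏ j ∈ Finset.univ.erase i, (f j ^ (γ j / p)) ^ p)
        * ∏ j ∈ Finset.univ.erase i, f j ^ (γ j % p)
        = ∏ j ∈ Finset.univ.erase i, f j ^ γ j := by
      rw [← Finset.prod_mul_distrib]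
      refine Finset.prod_congr rfl fun j _ => ?_
      rw [← pow_mul, ← pow_add, Nat.mul_comm, Nat.div_add_mod]
    have hheadpow : (f i ^ (γ i / p)) ^ p * f i ^ (γ i % p - 1) = f i ^ (γ i - 1) := by
      rw [← pow_mul, ← pow_add]
      congr 1
      conv_rhs => rw [← Nat.div_add_mod (γ i) p]
      rw [Nat.add_sub_assoc h0, Nat.mul_comm]
    calc (f i ^ (γ i / p)) ^ p * (∏ j ∈ Finset.univ.erase i, (f j ^ (γ j / p)) ^ p)
          * (((γ i % p : ℕ) : A) * (f i ^ (γ i % p - 1) * ∏ j ∈ Finset.univ.erase i, f j ^ (γ j % p)))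
        = ((γ i % p : ℕ) : A) * (((f i ^ (γ i / p)) ^ p * f i ^ (γ i % p - 1))
            * ((∏ j ∈ Finset.univ.erase i, (f j ^ (γ j / p)) ^ p)
              * ∏ j ∈ Finset.univ.erase i, f j ^ (γ j % p))) := by ring
      _ = ((γ i : ℕ) : A) * (f i ^ (γ i - 1) * ∏ j ∈ Finset.univ.erase i, f j ^ γ j) := by
          rw [cast_mod, hheadpow, htail]

end CharP

lemma sum_indicator_mul {p : ℕ} (α₀ : Fin m → Fin p) (v : A) (G : (Fin m → Fin p) → A) :
    ∑ α : Fin m → Fin p, (if α = α₀ then v else 0) * G α = v * G α₀ := by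
  have h : ∀ α : Fin m → Fin p, (if α = α₀ then v else 0) * G α
      = if α = α₀ then v * G α else 0 := by
    intro α; split <;> simp
  rw [Finset.sum_congr rfl fun α _ => h α, Finset.sum_ite_eq' _ α₀]
  simp

section Der
variable (B : Subring A) (p : ℕ) (f : Fin m → A) (i : Fin m)

open Classical in
/-- The formal partial derivative with respect to `f i`, defined on elements admitting a
`p`-basis expansion. -/
noncomputable def pDer (x : A) : A :=
  if h : ∃ co : (Fin m → Fin p) → A, (∀ α, co α ∈ B) ∧ x = ∑ α, co α * pMonomial f α then
    ∑ α, h.choose α * natDer f i fun j => (α j : ℕ)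
  else 0

variable {B p f}

lemma pDer_spec (hind : pIndependent B p f) {x : A} (co : (Fin m → Fin p) → A)
    (hco : ∀ α, co α ∈ B) (hx : x = ∑ α, co α * pMonomial f α) :
    pDer B p f i x = ∑ α, co α * natDer f i fun j => (α j : ℕ) := by
  have h : ∃ co : (Fin m → Fin p) → A, (∀ α, co α ∈ B) ∧ x = ∑ α, co α * pMonomial f α :=
    ⟨co, hco, hx⟩
  rw [pDer, dif_pos h]
  have hs := h.choose_spec
  have hu : ∀ α, h.choose α = co α := by
    intro α
    have hz : ∑ α, (h.choose α - co α) * pMonomial f α = 0 := by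
      simp only [sub_mul, Finset.sum_sub_distrib, ← hs.2, ← hx, sub_self]
    have := hind (fun α => h.choose α - co α) (fun α => sub_mem (hs.1 α) (hco α)) hz α
    exact sub_eq_zero.mp this
  exact Finset.sum_congr rfl fun α _ => by rw [hu α]

lemma pDer_zero (hind : pIndependent B p f) : pDer B p f i 0 = 0 := by
  rw [pDer_spec i hind (fun _ => 0) (fun _ => zero_mem B) (by simp)]
  simp

lemma pDer_add (hind : pIndependent B p f)
    (hsp : ∀ r ∈ CB B f, ∃ co : (Fin m → Fin p) → A, (∀ α, co α ∈ B) ∧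
      r = ∑ α : Fin m → Fin p, co α * pMonomial f α)
    {x y : A} (hx : x ∈ CB B f) (hy : y ∈ CB B f) :
    pDer B p f i (x + y) = pDer B p f i x + pDer B p f i y := by
  obtain ⟨a, ha, hxe⟩ := hsp x hx
  obtain ⟨b, hb, hye⟩ := hsp y hy
  rw [pDer_spec i hind a ha hxe, pDer_spec i hind b hb hye,
    pDer_spec i hind (fun α => a α + b α) (fun α => add_mem (ha α) (hb α))
      (by rw [hxe, hye, ← Finset.sum_add_distrib]; exact Finset.sum_congr rfl fun α _ => (add_mul _ _ _).symm),
    ← Finset.sum_add_distrib]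
  exact Finset.sum_congr rfl fun α _ => add_mul _ _ _

lemma pDer_mem_B (hp : 0 < p) (hind : pIndependent B p f) {x : A} (hx : x ∈ B) :
    pDer B p f i x = 0 := by
  set α₀ : Fin m → Fin p := fun _ => ⟨0, hp⟩ with hα₀
  have hmon : pMonomial f α₀ = 1 := by simp [pMonomial, hα₀]
  rw [pDer_spec i hind (fun α => if α = α₀ then x else 0)
    (fun α => by split; exacts [hx, zero_mem B])
    (by rw [sum_indicator_mul α₀ x (fun α => pMonomial f α), hmon, mul_one])]
  rw [sum_indicator_mul α₀ x (fun α => natDer f i fun j => (α j : ℕ))]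
  simp [natDer, hα₀]

lemma pDer_f (hp1 : 1 < p) (hind : pIndependent B p f) (j : Fin m) :
    pDer B p f i (f j) = if j = i then 1 else 0 := by
  have hp : 0 < p := lt_trans one_pos hp1
  set αj : Fin m → Fin p := fun k => if k = j then ⟨1, hp1⟩ else ⟨0, hp⟩ with hαj
  have hval : ∀ k, ((αj k : ℕ)) = if k = j then 1 else 0 := by
    intro k; rw [hαj]; dsimp only; split <;> rfl
  have hmon : pMonomial f αj = f j := by
    rw [pMonomial]
    rw [Finset.prod_congr rfl fun k _ => by rw [hval k]]
    rw [Finset.prod_congr rfl fun k _ => (by split <;> simp [*] :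
      f k ^ (if k = j then 1 else 0) = if k = j then f k else 1)]
    rw [Finset.prod_ite_eq' Finset.univ j]
    simp
  rw [pDer_spec i hind (fun α => if α = αj then 1 else 0)
    (fun α => by split; exacts [one_mem B, zero_mem B])
    (by rw [sum_indicator_mul αj 1 (fun α => pMonomial f α), hmon, one_mul])]
  rw [sum_indicator_mul αj 1 (fun α => natDer f i fun j => (α j : ℕ)), one_mul]
  rw [natDer]
  by_cases hji : j = i
  · subst hji
    rw [hval]
    simp only [if_pos rfl]
    have : ∀ k, k ∈ Finset.univ.erase j → f k ^ ((αj k : ℕ)) = 1 := by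
      intro k hk
      rw [hval k, if_neg (Finset.ne_of_mem_erase hk)]
      exact pow_zero _
    rw [Finset.prod_congr rfl this]
    simp
  · rw [if_neg hji, hval, if_neg (fun h => hji h.symm)]
    push_cast
    simp

lemma sum_indicator_mul2 {p : ℕ} (α₀ : Fin m → Fin p) (v : A) (G : (Fin m → Fin p) → A) :
    ∑ α : Fin m → Fin p, (if α₀ = α then v else 0) * G α = v * G α₀ := by
  have h : ∀ α : Fin m → Fin p, (if α₀ = α then v else 0) * G α
      = if α₀ = α then v * G α else 0 := by
    intro α; split <;> simp
  rw [Finset.sum_congr rfl fun α _ => h α, Finset.sum_ite_eq _ α₀]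
  simp

lemma pDer_mul [CharP A p] (hp : 0 < p) (hB : ∀ a : A, a ^ p ∈ B)
    (hind : pIndependent B p f)
    (hsp : ∀ r ∈ CB B f, ∃ co : (Fin m → Fin p) → A, (∀ α, co α ∈ B) ∧
      r = ∑ α : Fin m → Fin p, co α * pMonomial f α)
    {x y : A} (hx : x ∈ CB B f) (hy : y ∈ CB B f) :
    pDer B p f i (x * y) = x * pDer B p f i y + y * pDer B p f i x := by
  obtain ⟨a, ha, hxe⟩ := hsp x hx
  obtain ⟨b, hb, hye⟩ := hsp y hy
  set red : (Fin m → Fin p) → (Fin m → Fin p) → (Fin m → Fin p) :=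
    fun α β j => ⟨((α j : ℕ) + (β j : ℕ)) % p, Nat.mod_lt _ hp⟩ with hred
  set e : (Fin m → Fin p) → (Fin m → Fin p) → A :=
    fun α β => ∏ j, (f j ^ (((α j : ℕ) + (β j : ℕ)) / p)) ^ p with he
  set co : (Fin m → Fin p) → A := fun δ =>
    ∑ z : (Fin m → Fin p) × (Fin m → Fin p),
      if red z.1 z.2 = δ then a z.1 * b z.2 * e z.1 z.2 else 0 with hco
  have hcoB : ∀ δ, co δ ∈ B := by
    intro δ
    refine Subring.sum_mem B fun z _ => ?_
    split
    · exact mul_mem (mul_mem (ha z.1) (hb z.2)) (Subring.prod_mem B fun j _ => hB _)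
    · exact zero_mem B
  have hkey1 : ∀ α β : Fin m → Fin p,
      pMonomial f α * pMonomial f β = e α β * pMonomial f (red α β) := by
    intro α β
    have h1 : pMonomial f α * pMonomial f β
        = natMon f ((fun j => (α j : ℕ)) + fun j => (β j : ℕ)) := (natMon_add f _ _).symm
    rw [h1, natMon_reduce p f _ hp]
    rfl
  have hkey2 : ∀ α β : Fin m → Fin p,
      e α β * natDer f i (fun j => ((red α β) j : ℕ))
        = natDer f i ((fun j => (α j : ℕ)) + fun j => (β j : ℕ)) :=
    fun α β => natDer_reduce p f i _ hp
  have hval : x * y = ∑ δ : Fin m → Fin p, co δ * pMonomial f δ := by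
    have := calc
      ∑ δ : Fin m → Fin p, co δ * pMonomial f δ
          = ∑ δ : Fin m → Fin p, ∑ z : (Fin m → Fin p) × (Fin m → Fin p),
              (if red z.1 z.2 = δ then a z.1 * b z.2 * e z.1 z.2 else 0) * pMonomial f δ :=
            Finset.sum_congr rfl fun δ _ => Finset.sum_mul _ _ _
      _ = ∑ z : (Fin m → Fin p) × (Fin m → Fin p), ∑ δ : Fin m → Fin p,
              (if red z.1 z.2 = δ then a z.1 * b z.2 * e z.1 z.2 else 0) * pMonomial f δ :=
            Finset.sum_comm
      _ = ∑ z : (Fin m → Fin p) × (Fin m → Fin p),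
              (a z.1 * pMonomial f z.1) * (b z.2 * pMonomial f z.2) := by
            refine Finset.sum_congr rfl fun z _ => ?_
            rw [sum_indicator_mul2 (red z.1 z.2) _ (fun δ => pMonomial f δ), ← mul_assoc,
              mul_assoc (a z.1 * b z.2), ← hkey1 z.1 z.2]
            ring
      _ = ∑ α : Fin m → Fin p, ∑ β : Fin m → Fin p,
              (a α * pMonomial f α) * (b β * pMonomial f β) := Fintype.sum_prod_type _
      _ = x * y := by rw [hxe, hye, Finset.sum_mul_sum]
    exact this.symm
  rw [pDer_spec i hind co hcoB hval, pDer_spec i hind a ha hxe, pDer_spec i hind b hb hye]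
  calc
    ∑ δ : Fin m → Fin p, co δ * natDer f i (fun j => (δ j : ℕ))
        = ∑ δ : Fin m → Fin p, ∑ z : (Fin m → Fin p) × (Fin m → Fin p),
            (if red z.1 z.2 = δ then a z.1 * b z.2 * e z.1 z.2 else 0)
              * natDer f i (fun j => (δ j : ℕ)) :=
          Finset.sum_congr rfl fun δ _ => Finset.sum_mul _ _ _
    _ = ∑ z : (Fin m → Fin p) × (Fin m → Fin p), ∑ δ : Fin m → Fin p,
            (if red z.1 z.2 = δ then a z.1 * b z.2 * e z.1 z.2 else 0)
              * natDer f i (fun j => (δ j : ℕ)) := Finset.sum_comm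
    _ = ∑ z : (Fin m → Fin p) × (Fin m → Fin p),
            (a z.1 * pMonomial f z.1) * (b z.2 * natDer f i (fun j => ((z.2 : Fin m → Fin p) j : ℕ)))
            + ∑ z : (Fin m → Fin p) × (Fin m → Fin p),
            (b z.2 * pMonomial f z.2) * (a z.1 * natDer f i (fun j => ((z.1 : Fin m → Fin p) j : ℕ))) := by
          rw [← Finset.sum_add_distrib]
          refine Finset.sum_congr rfl fun z _ => ?_
          rw [sum_indicator_mul2 (red z.1 z.2) _ (fun δ => natDer f i (fun j => (δ j : ℕ))),
            mul_assoc (a z.1 * b z.2), hkey2 z.1 z.2, natDer_add]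
          have hMα : natMon f (fun j => ((z.1 : Fin m → Fin p) j : ℕ)) = pMonomial f z.1 := rfl
          have hMβ : natMon f (fun j => ((z.2 : Fin m → Fin p) j : ℕ)) = pMonomial f z.2 := rfl
          rw [hMα, hMβ]
          ring
    _ = x * (∑ β : Fin m → Fin p, b β * natDer f i fun j => (β j : ℕ))
          + y * (∑ α : Fin m → Fin p, a α * natDer f i fun j => (α j : ℕ)) := by
          congr 1
          · rw [Fintype.sum_prod_type _, hxe, Finset.sum_mul_sum]
          · rw [hye]
            rw [Finset.sum_mul_sum]
            rw [← Fintype.sum_prod_type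
              (fun z : (Fin m → Fin p) × (Fin m → Fin p) =>
                b z.1 * pMonomial f z.1 * (a z.2 * natDer f i fun j => ((z.2 : Fin m → Fin p) j : ℕ)))]
            exact Fintype.sum_equiv (Equiv.prodComm _ _) _ _ fun z => rfl

end Der

lemma mem_CB_of_mem_closure [Nontrivial A] {B : Subring A} {f : Fin m → A} {x : A}
    (hx : x ∈ Subring.closure ((B : Set A) ∪ Set.range f)) : x ∈ CB B f :=
  ⟨1, x, one_mem _, hx, one_ne_zero, mul_one x⟩

section Der2
variable {B : Subring A} {p : ℕ} {f : Fin m → A} (i : Fin m)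

lemma pDer_pow [Nontrivial A] [CharP A p] (hp : 0 < p) (hB : ∀ a : A, a ^ p ∈ B)
    (hind : pIndependent B p f)
    (hsp : ∀ r ∈ CB B f, ∃ co : (Fin m → Fin p) → A, (∀ α, co α ∈ B) ∧
      r = ∑ α : Fin m → Fin p, co α * pMonomial f α)
    {x : A} (hx : x ∈ Subring.closure ((B : Set A) ∪ Set.range f)) :
    ∀ n : ℕ, pDer B p f i (x ^ (n + 1)) = ((n + 1 : ℕ) : A) * (x ^ n * pDer B p f i x) := by
  intro n
  induction n with
  | zero => simp
  | succ n ih =>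
    have hxc := mem_CB_of_mem_closure hx
    have hxn : x ^ (n + 1) ∈ CB B f := mem_CB_of_mem_closure (pow_mem hx (n + 1))
    rw [pow_succ, pDer_mul i hp hB hind hsp hxn hxc, ih]
    push_cast
    ring

lemma pDer_eq_zero_of_mem_Ri [Nontrivial A] [CharP A p] (hp1 : 1 < p)
    (hB : ∀ a : A, a ^ p ∈ B) (hind : pIndependent B p f)
    (hsp : ∀ r ∈ CB B f, ∃ co : (Fin m → Fin p) → A, (∀ α, co α ∈ B) ∧
      r = ∑ α : Fin m → Fin p, co α * pMonomial f α)
    {x : A} (hx : x ∈ Subring.closure ((B : Set A) ∪ (f '' {j | j ≠ i}))) :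
    x ∈ Subring.closure ((B : Set A) ∪ Set.range f) ∧ pDer B p f i x = 0 := by
  have hp : 0 < p := lt_trans one_pos hp1
  refine Subring.closure_induction ?_ ?_ ?_ ?_ ?_ ?_ hx
  · rintro y (hyB | hyf)
    · exact ⟨Subring.subset_closure (Or.inl hyB), pDer_mem_B i hp hind hyB⟩
    · obtain ⟨j, hj, rfl⟩ := hyf
      refine ⟨Subring.subset_closure (Or.inr ⟨j, rfl⟩), ?_⟩
      rw [pDer_f i hp1 hind j, if_neg hj]
  · exact ⟨zero_mem _, pDer_zero i hind⟩
  · exact ⟨one_mem _, pDer_mem_B i hp hind (one_mem B)⟩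
  · rintro u v _ _ ⟨huS, hud⟩ ⟨hvS, hvd⟩
    exact ⟨add_mem huS hvS, by
      rw [pDer_add i hind hsp (mem_CB_of_mem_closure huS) (mem_CB_of_mem_closure hvS), hud, hvd,
        add_zero]⟩
  · rintro u _ ⟨huS, hud⟩
    refine ⟨neg_mem huS, ?_⟩
    have h1 : (-1 : A) ∈ B := neg_mem (one_mem B)
    have h1S : (-1 : A) ∈ Subring.closure ((B : Set A) ∪ Set.range f) :=
      Subring.subset_closure (Or.inl h1)
    have hneg : (-u : A) = (-1) * u := by ring
    rw [hneg, pDer_mul i hp hB hind hsp (mem_CB_of_mem_closure h1S) (mem_CB_of_mem_closure huS),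
      pDer_mem_B i hp hind h1, hud]
    ring
  · rintro u v _ _ ⟨huS, hud⟩ ⟨hvS, hvd⟩
    exact ⟨mul_mem huS hvS, by
      rw [pDer_mul i hp hB hind hsp (mem_CB_of_mem_closure huS) (mem_CB_of_mem_closure hvS),
        hud, hvd]
      ring⟩

lemma natCast_isUnit [CharP A p] (hp : p.Prime) {a : ℕ} (ha : ¬ p ∣ a) : IsUnit ((a : ℕ) : A) := by
  have hco : a.Coprime p := ((Nat.Prime.coprime_iff_not_dvd hp).mpr ha).symm
  obtain ⟨u, -, hu⟩ := Nat.exists_mul_mod_eq_one_of_coprime hco hp.one_lt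
  have h2 := cast_mod (A := A) p (a * u)
  rw [hu] at h2
  push_cast at h2
  exact IsUnit.of_mul_eq_one _ h2.symm

end Der2

lemma exists_good_pair {p V : ℕ} (hp : p.Prime) (hV : 2 ≤ V) :
    ∃ a s : ℕ, 1 ≤ a ∧ 1 ≤ s ∧ ¬ p ∣ a ∧ p * s ≤ a * V ∧ a * V ≤ p * s + (V - 1) := by
  have hp2 := hp.two_le
  by_cases hpV : p ≤ V
  · exact ⟨1, 1, le_refl 1, le_refl 1, Nat.Prime.not_dvd_one hp, by omega, by omega⟩
  · push_neg at hpV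
    have hpV' : ¬ p ∣ V := fun h => absurd (Nat.le_of_dvd (by omega) h) (by omega)
    have hco : V.Coprime p := ((Nat.Prime.coprime_iff_not_dvd hp).mpr hpV').symm
    obtain ⟨u, -, hu⟩ := Nat.exists_mul_mod_eq_one_of_coprime hco hp.one_lt
    set a := u + p with hadef
    have haV : a * V % p = 1 := by
      have h' : a * V = V * u + V * p := by ring
      rw [h', Nat.add_mul_mod_self_right, hu]
    have hsd : p * (a * V / p) + 1 = a * V := by
      conv_rhs => rw [← Nat.div_add_mod (a * V) p]
      rw [haV]
    set s := a * V / p with hsdef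
    have haVbig : 2 * p ≤ a * V := by
      calc 2 * p ≤ V * a := Nat.mul_le_mul hV (by omega)
        _ = a * V := Nat.mul_comm _ _
    have hs1 : 1 ≤ s := by
      rcases Nat.eq_zero_or_pos s with h0 | h1
      · rw [h0] at hsd
        omega
      · exact h1
    have hpa : ¬ p ∣ a := by
      intro hd
      have hdav : p ∣ a * V := hd.mul_right V
      have h1 : p ∣ 1 := (Nat.dvd_add_right (dvd_mul_right p s)).mp (by rw [hsd]; exact hdav)
      exact absurd (Nat.le_of_dvd one_pos h1) (by omega)
    refine ⟨a, s, by omega, hs1, hpa, ?_, ?_⟩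
    · calc p * s ≤ p * s + 1 := Nat.le_succ _
        _ = a * V := hsd
    · rw [← hsd]
      exact Nat.add_le_add_left (by omega : 1 ≤ V - 1) _

end PBasisAux

open PBasisAux in
/-- **Proposition 3 (i).** If `f₁,…,f_m` form a `p`-basis of `C_B(f₁,…,f_m)` over `B`, then
for every `i` and all `b, c ∈ Rᵢ = B[f₁,…,f̂ᵢ,…,f_m]` with `b ≠ 0` and `gcd(b,c) ∼ 1`, the
element `b·fᵢ + c` is square-free and `B`-free. -/
theorem squarefree_and_BFree_of_pBasis
    {A : Type*} [CommRing A] [IsDomain A] [UniqueFactorizationMonoid A]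
    (p : ℕ) (hp : 0 < p) [CharP A p]
    (B : Subring A) (hB : ∀ a : A, a ^ p ∈ B) {m : ℕ} (f : Fin m → A)
    (hbasis : IsPBasis B (CB B f) p f) :
    ∀ i : Fin m, ∀ b c : A,
      b ∈ Subring.closure ((B : Set A) ∪ (f '' {j | j ≠ i})) →
      c ∈ Subring.closure ((B : Set A) ∪ (f '' {j | j ≠ i})) →
      b ≠ 0 → IsRelPrime b c →
      Squarefree (b * f i + c) ∧ BFree B (b * f i + c) := by
  intro i b c hbR hcR hb0 hrel
  haveI : NeZero p := ⟨hp.ne'⟩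
  have hprime : p.Prime := (CharP.char_is_prime_of_pos A p).out
  have hp1 : 1 < p := hprime.one_lt
  have hind := hbasis.2.2.1
  have hsp := hbasis.2.2.2
  have hmono : Subring.closure ((B : Set A) ∪ (f '' {j | j ≠ i}))
      ≤ Subring.closure ((B : Set A) ∪ Set.range f) :=
    Subring.closure_mono (Set.union_subset_union_right _ (Set.image_subset_range f _))
  have hbS : b ∈ Subring.closure ((B : Set A) ∪ Set.range f) := hmono hbR
  have hcS : c ∈ Subring.closure ((B : Set A) ∪ Set.range f) := hmono hcR
  have hfS : ∀ j, f j ∈ Subring.closure ((B : Set A) ∪ Set.range f) :=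
    fun j => Subring.subset_closure (Or.inr ⟨j, rfl⟩)
  have hBS : ∀ x ∈ B, x ∈ Subring.closure ((B : Set A) ∪ Set.range f) :=
    fun x hx => Subring.subset_closure (Or.inl hx)
  set g := b * f i + c with hg
  have hgS : g ∈ Subring.closure ((B : Set A) ∪ Set.range f) :=
    add_mem (mul_mem hbS (hfS i)) hcS
  have hCBmem : ∀ x ∈ Subring.closure ((B : Set A) ∪ Set.range f), x ∈ CB B f :=
    fun x hx => mem_CB_of_mem_closure hx
  have hdb : pDer B p f i b = 0 := (pDer_eq_zero_of_mem_Ri i hp1 hB hind hsp hbR).2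
  have hdc : pDer B p f i c = 0 := (pDer_eq_zero_of_mem_Ri i hp1 hB hind hsp hcR).2
  have hdfi : pDer B p f i (f i) = 1 := by rw [pDer_f i hp1 hind i, if_pos rfl]
  have hdg : pDer B p f i g = b := by
    rw [hg, pDer_add i hind hsp (hCBmem _ (mul_mem hbS (hfS i))) (hCBmem _ hcS),
      pDer_mul i hp hB hind hsp (hCBmem _ hbS) (hCBmem _ (hfS i)), hdb, hdc, hdfi]
    ring
  have hg0 : g ≠ 0 := by
    intro h
    apply hb0
    rw [← hdg, h, pDer_zero i hind]
  constructor
  · -- squarefree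
    intro x hx
    by_contra hxu
    have hx0 : x ≠ 0 := by
      rintro rfl
      exact hg0 (zero_dvd_iff.mp (by simpa using hx))
    obtain ⟨q, hqirr, hqx⟩ := WfDvdMonoid.exists_irreducible_factor hxu hx0
    have hq : Prime q := UniqueFactorizationMonoid.irreducible_iff_prime.mp hqirr
    have hq0 : q ≠ 0 := hq.ne_zero
    have hq2 : q * q ∣ g := dvd_trans (mul_dvd_mul hqx hqx) hx
    obtain ⟨V, h, hqh, hgf⟩ := WfDvdMonoid.max_power_factor hg0 hqirr
    have hV2 : 2 ≤ V := by
      by_contra hVlt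
      push_neg at hVlt
      have hqdvdh : q ∣ h := by
        rcases (by omega : V = 0 ∨ V = 1) with rfl | rfl
        · exact (dvd_mul_right q q).trans (by rwa [hgf, pow_zero, one_mul] at hq2)
        · exact (mul_dvd_mul_iff_left hq0).mp (by rwa [hgf, pow_one] at hq2)
      exact hqh hqdvdh
    obtain ⟨a, s, ha1, hs1, hpa, hps_le, hle_ps⟩ := exists_good_pair hprime hV2
    have hqsp : ((q ^ s) ^ p : A) ∈ B := hB (q ^ s)
    have hqsp0 : ((q ^ s) ^ p : A) ≠ 0 := pow_ne_zero _ (pow_ne_zero _ hq0)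
    set w : A := q ^ (a * V - p * s) * h ^ a with hw
    have hga : g ^ a = (q ^ s) ^ p * w := by
      rw [hgf, mul_pow, ← pow_mul, ← pow_mul, hw, ← mul_assoc, ← pow_add]
      have he : s * p + (a * V - p * s) = V * a := by
        rw [Nat.mul_comm s p, Nat.add_sub_cancel' hps_le, Nat.mul_comm]
      rw [he]
    have hwCB : w ∈ CB B f :=
      ⟨(q ^ s) ^ p, g ^ a, hBS _ hqsp, pow_mem hgS a, hqsp0, by rw [hga]; ring⟩
    have ha' : a - 1 + 1 = a := Nat.succ_pred_eq_of_pos ha1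
    have hdga : pDer B p f i (g ^ a) = ((a : ℕ) : A) * (g ^ (a - 1) * b) := by
      conv_lhs => rw [← ha']
      rw [pDer_pow i hp hB hind hsp hgS (a - 1), hdg, ha']
    have hdga2 : pDer B p f i (g ^ a) = (q ^ s) ^ p * pDer B p f i w := by
      rw [hga, pDer_mul i hp hB hind hsp (hCBmem _ (hBS _ hqsp)) hwCB,
        pDer_mem_B i hp hind hqsp]
      ring
    have heq : ((a : ℕ) : A) * (g ^ (a - 1) * b) = (q ^ s) ^ p * pDer B p f i w := by
      rw [← hdga, hdga2]
    have hga1 : g ^ (a - 1) = q ^ (V * (a - 1)) * h ^ (a - 1) := by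
      rw [hgf, mul_pow, ← pow_mul]
    have hVa1 : V * (a - 1) + 1 ≤ p * s := by
      obtain ⟨a', rfl⟩ : ∃ a', a = a' + 1 := ⟨a - 1, by omega⟩
      have h1 : (a' + 1) * V = a' * V + V := by ring
      have h2 : V * (a' + 1 - 1) = a' * V := by rw [Nat.add_sub_cancel, Nat.mul_comm]
      rw [h2]
      omega
    set t := p * s - V * (a - 1) with ht
    have hqsp_eq : ((q ^ s) ^ p : A) = q ^ (V * (a - 1)) * q ^ t := by
      rw [← pow_mul, ← pow_add]
      congr 1
      rw [Nat.mul_comm s p, ht]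
      omega
    rw [hga1, hqsp_eq] at heq
    have heq2 : q ^ (V * (a - 1)) * (((a : ℕ) : A) * (h ^ (a - 1) * b))
        = q ^ (V * (a - 1)) * (q ^ t * pDer B p f i w) := by
      linear_combination heq
    have hqV0 : (q : A) ^ (V * (a - 1)) ≠ 0 := pow_ne_zero _ hq0
    have hmain : ((a : ℕ) : A) * (h ^ (a - 1) * b) = q ^ t * pDer B p f i w :=
      mul_left_cancel₀ hqV0 heq2
    have hqdvd : q ∣ ((a : ℕ) : A) * (h ^ (a - 1) * b) := by
      rw [hmain]
      exact Dvd.dvd.mul_right (dvd_pow_self q (by omega : t ≠ 0)) _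
    have haunit : IsUnit ((a : ℕ) : A) := natCast_isUnit hprime hpa
    have hqb : q ∣ b := by
      rcases hq.dvd_or_dvd hqdvd with h' | h'
      · exact absurd (isUnit_of_dvd_unit h' haunit) hq.not_unit
      · rcases hq.dvd_or_dvd h' with h'' | h''
        · exact absurd (hq.dvd_of_dvd_pow h'') hqh
        · exact h''
    have hqg : q ∣ g := by
      rw [hgf]
      exact Dvd.dvd.mul_right (dvd_pow_self q (by omega : V ≠ 0)) _
    have hqc : q ∣ c := by
      have hcg : c = g - b * f i := by rw [hg]; ring
      rw [hcg]
      exact dvd_sub hqg (hqb.mul_right _)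
    exact hq.not_unit (hrel hqb hqc)
  · -- B-free
    intro β hβ hβg
    have hβ0 : β ≠ 0 := by
      rintro rfl
      exact hg0 (zero_dvd_iff.mp hβg)
    obtain ⟨w, hwg⟩ := hβg
    have hwCB : w ∈ CB B f := ⟨β, g, hBS _ hβ, hgS, hβ0, by rw [hwg]; ring⟩
    have hdgw : b = β * pDer B p f i w := by
      rw [← hdg, hwg, pDer_mul i hp hB hind hsp (hCBmem _ (hBS _ hβ)) hwCB,
        pDer_mem_B i hp hind hβ]
      ring
    have hβb : β ∣ b := ⟨pDer B p f i w, hdgw⟩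
    have hβc : β ∣ c := by
      have hcg : c = g - b * f i := by rw [hg]; ring
      rw [hcg, hwg, hdgw]
      exact ⟨w - pDer B p f i w * f i, by ring⟩
    exact hrel hβb hβc
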